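/- As x → +∞, the ratio of modified Bessel functions admits the asymptotic expansion I₁(x)/I₀(x) = 1 − 1/(2x) − 1/(8x²) − 1/(8x³) − 25/(128x⁴) + O(1/x⁵); that is, x⁴·(I₁(x)/I₀(x) − 1 + 1/(2x) + 1/(8x²) + 1/(8x³) + 25/(128x⁴)) = O(1/x) as x → +∞. -/

import Mathlib

open Asymptotics Filter Topology

/-- The modified Bessel function of the first kind of order zero. -/
noncomputable def besselI0 (x : ℝ) : ℝ :=
  ∑' k : ℕ, (x / 2) ^ (2 * k) / (Nat.factorial k : ℝ) ^ 2

/-- The modified Bessel function of the first kind of order one. -/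
noncomputable def besselI1 (x : ℝ) : ℝ :=
  ∑' k : ℕ, (x / 2) ^ (2 * k + 1) / ((Nat.factorial k : ℝ) * (Nat.factorial (k + 1) : ℝ))

lemma sq_half (x : ℝ) (k : ℕ) : (x/2)^(2*k) = (x^2/4)^k := by
  rw [pow_mul]; ring_nf

lemma abs_sq_half (x : ℝ) (k : ℕ) : |x/2|^(2*k) = (x^2/4)^k := by
  rw [pow_mul]; congr 1; rw [sq_abs]; ring

lemma summ0 (x : ℝ) : Summable (fun k : ℕ => (x/2)^(2*k) / (Nat.factorial k : ℝ)^2) := by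
  refine Summable.of_nonneg_of_le ?_ ?_ (Real.summable_pow_div_factorial (x^2/4))
  · intro k; rw [sq_half]; positivity
  · intro k
    rw [sq_half]
    apply div_le_div_of_nonneg_left (by positivity) (by positivity)
    exact_mod_cast Nat.le_self_pow two_ne_zero _

lemma summ1 (x : ℝ) :
    Summable (fun k : ℕ => (x/2)^(2*k+1) / ((Nat.factorial k : ℝ) * (Nat.factorial (k+1) : ℝ))) := by
  refine Summable.of_norm_bounded (g := fun k : ℕ => |x/2| * ((x^2/4)^k / (Nat.factorial k : ℝ)))
    ((Real.summable_pow_div_factorial (x^2/4)).mul_left _) ?_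
  intro k
  have hfac : (1:ℝ) ≤ (Nat.factorial (k+1) : ℝ) := by exact_mod_cast Nat.one_le_iff_ne_zero.mpr (Nat.factorial_ne_zero _)
  rw [Real.norm_eq_abs, abs_div, abs_of_pos (by positivity : (0:ℝ) < (Nat.factorial k : ℝ) * (Nat.factorial (k+1) : ℝ))]
  rw [pow_succ, abs_mul, abs_pow, abs_sq_half]
  rw [div_le_iff₀ (by positivity)]
  have h1 : (x^2/4)^k * |x/2| * 1 ≤ (x^2/4)^k * |x/2| * (Nat.factorial (k+1):ℝ) := by
    gcongr <;> positivity
  calc (x^2/4)^k * |x/2| = (x^2/4)^k * |x/2| * 1 := by ring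
    _ ≤ (x^2/4)^k * |x/2| * (Nat.factorial (k+1):ℝ) := h1
    _ = |x/2| * ((x^2/4)^k / ↑k.factorial) * (↑k.factorial * ↑(k+1).factorial) := by
        field_simp

lemma term_deriv (n : ℕ) (c y : ℝ) :
    HasDerivAt (fun y : ℝ => (y/2)^n / c) ((n:ℝ) * (y/2)^(n-1) * (1/2) / c) y := by
  have h : HasDerivAt (fun y : ℝ => y/2) (1/2) y := (hasDerivAt_id y).div_const 2
  exact (h.pow n).div_const c

lemma bound0 {R : ℝ} (hR : 1 ≤ R) {y : ℝ} (hy : |y| ≤ R) (k : ℕ) :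
    ‖((2*k : ℕ):ℝ) * (y/2)^(2*k-1) * (1/2) / ((Nat.factorial k : ℝ)^2)‖
      ≤ (2*R^2)^k / (Nat.factorial k : ℝ) := by
  have e : ‖((2*k : ℕ):ℝ) * (y/2)^(2*k-1) * (1/2) / ((Nat.factorial k : ℝ)^2)‖
      = ((2*k : ℕ):ℝ) * (|y|/2)^(2*k-1) * (1/2) / ((Nat.factorial k : ℝ)^2) := by
    simp [Real.norm_eq_abs, abs_div, abs_mul, abs_pow, Nat.abs_cast]
  rw [e]
  have hy2 : |y|/2 ≤ R := by linarith [abs_nonneg y]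
  have h1 : (|y|/2)^(2*k-1) ≤ R^(2*k) := by
    calc (|y|/2)^(2*k-1) ≤ R^(2*k-1) := pow_le_pow_left₀ (by positivity) hy2 _
      _ ≤ R^(2*k) := pow_le_pow_right₀ hR (Nat.sub_le _ _)
  have hk : ((2*k:ℕ):ℝ) * (1/2) ≤ 2^k := by
    push_cast
    have h2 : (k:ℝ) ≤ 2^k := by exact_mod_cast (Nat.lt_two_pow_self).le
    linarith
  have hone : (1:ℝ) ≤ (Nat.factorial k : ℝ) := by
    exact_mod_cast Nat.one_le_iff_ne_zero.mpr (Nat.factorial_ne_zero k)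
  have hfp : (0:ℝ) < (Nat.factorial k : ℝ) := by linarith
  have hfac : (Nat.factorial k : ℝ) ≤ ((Nat.factorial k : ℝ))^2 := by nlinarith
  have hR2 : (2*R^2)^k = 2^k * R^(2*k) := by rw [mul_pow, pow_mul]
  rw [hR2, div_le_div_iff₀ (by positivity) hfp]
  calc ((2*k:ℕ):ℝ) * (|y|/2)^(2*k-1) * (1/2) * (Nat.factorial k : ℝ)
      = (((2*k:ℕ):ℝ) * (1/2)) * (|y|/2)^(2*k-1) * (Nat.factorial k : ℝ) := by ring
    _ ≤ 2^k * R^(2*k) * ((Nat.factorial k : ℝ))^2 := by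
        apply mul_le_mul _ hfac hfp.le (by positivity)
        exact mul_le_mul hk h1 (by positivity) (by positivity)

lemma bound1 {R : ℝ} (hR : 1 ≤ R) {y : ℝ} (hy : |y| ≤ R) (k : ℕ) :
    ‖((2*k+1 : ℕ):ℝ) * (y/2)^(2*k) * (1/2) / ((Nat.factorial k : ℝ) * (Nat.factorial (k+1) : ℝ))‖
      ≤ (2*R^2)^k / (Nat.factorial k : ℝ) := by
  have e : ‖((2*k+1 : ℕ):ℝ) * (y/2)^(2*k) * (1/2) / ((Nat.factorial k : ℝ) * (Nat.factorial (k+1) : ℝ))‖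
      = ((2*k+1 : ℕ):ℝ) * (|y|/2)^(2*k) * (1/2) / ((Nat.factorial k : ℝ) * (Nat.factorial (k+1) : ℝ)) := by
    simp [Real.norm_eq_abs, abs_div, abs_mul, abs_pow, Nat.abs_cast]
    rw [abs_of_nonneg (by positivity : (0:ℝ) ≤ 2*(k:ℝ)+1)]
  rw [e]
  have hy2 : |y|/2 ≤ R := by linarith [abs_nonneg y]
  have h1 : (|y|/2)^(2*k) ≤ R^(2*k) := pow_le_pow_left₀ (by positivity) hy2 _
  have hk : ((2*k+1:ℕ):ℝ) * (1/2) ≤ 2^k := by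
    push_cast
    have h2 : (k:ℝ)+1 ≤ 2^k := by exact_mod_cast (Nat.lt_two_pow_self (n := k))
    linarith
  have hone : (1:ℝ) ≤ (Nat.factorial k : ℝ) := by
    exact_mod_cast Nat.one_le_iff_ne_zero.mpr (Nat.factorial_ne_zero k)
  have hone1 : (1:ℝ) ≤ (Nat.factorial (k+1) : ℝ) := by
    exact_mod_cast Nat.one_le_iff_ne_zero.mpr (Nat.factorial_ne_zero (k+1))
  have hfp : (0:ℝ) < (Nat.factorial k : ℝ) := by linarith
  have hR2 : (2*R^2)^k = 2^k * R^(2*k) := by rw [mul_pow, pow_mul]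
  rw [hR2, div_le_div_iff₀ (by positivity) hfp]
  calc ((2*k+1:ℕ):ℝ) * (|y|/2)^(2*k) * (1/2) * (Nat.factorial k : ℝ)
      = (((2*k+1:ℕ):ℝ) * (1/2)) * (|y|/2)^(2*k) * ((Nat.factorial k : ℝ) * 1) := by ring
    _ ≤ 2^k * R^(2*k) * ((Nat.factorial k : ℝ) * (Nat.factorial (k+1) : ℝ)) := by
        apply mul_le_mul _ (by nlinarith) (by positivity) (by positivity)
        exact mul_le_mul hk h1 (by positivity) (by positivity)

lemma summ0' (x : ℝ) :
    Summable (fun k : ℕ => ((2*k : ℕ):ℝ) * (x/2)^(2*k-1) * (1/2) / ((Nat.factorial k : ℝ)^2)) := by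
  have hR : 1 ≤ |x| + 1 := by linarith [abs_nonneg x]
  exact Summable.of_norm_bounded (Real.summable_pow_div_factorial (2*(|x|+1)^2))
    (fun k => bound0 hR (by linarith : |x| ≤ |x|+1) k)

lemma summ1' (x : ℝ) :
    Summable (fun k : ℕ => ((2*k+1 : ℕ):ℝ) * (x/2)^(2*k) * (1/2) /
      ((Nat.factorial k : ℝ) * (Nat.factorial (k+1) : ℝ))) := by
  have hR : 1 ≤ |x| + 1 := by linarith [abs_nonneg x]
  exact Summable.of_norm_bounded (Real.summable_pow_div_factorial (2*(|x|+1)^2))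
    (fun k => bound1 hR (by linarith : |x| ≤ |x|+1) k)

lemma hasDerivAt_besselI0 (x : ℝ) : HasDerivAt besselI0 (besselI1 x) x := by
  have hR : 1 ≤ |x| + 1 := by linarith [abs_nonneg x]
  have hxmem : x ∈ Set.Ioo (-(|x|+1)) (|x|+1) := by
    constructor
    · nlinarith [neg_abs_le x]
    · nlinarith [le_abs_self x]
  have h1 : HasDerivAt besselI0
      (∑' k : ℕ, ((2*k : ℕ):ℝ) * (x/2)^(2*k-1) * (1/2) / ((Nat.factorial k : ℝ)^2)) x := by
    refine hasDerivAt_tsum_of_isPreconnected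
      (Real.summable_pow_div_factorial (2*(|x|+1)^2)) isOpen_Ioo isPreconnected_Ioo
      (fun k y _ => term_deriv (2*k) _ y) ?_ hxmem (summ0 x) hxmem
    intro k y hy
    exact bound0 hR (abs_le.mpr ⟨hy.1.le, hy.2.le⟩ : |y| ≤ |x|+1) k
  have h2 : (∑' k : ℕ, ((2*k : ℕ):ℝ) * (x/2)^(2*k-1) * (1/2) / ((Nat.factorial k : ℝ)^2))
      = besselI1 x := by
    rw [Summable.tsum_eq_zero_add (summ0' x)]
    simp only [Nat.mul_zero, Nat.cast_zero, zero_mul, zero_div, zero_add]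
    unfold besselI1
    apply tsum_congr
    intro j
    have hj : 2*(j+1)-1 = 2*j+1 := by omega
    rw [hj]
    have hfs : (Nat.factorial (j+1) : ℝ) = (j+1) * (Nat.factorial j : ℝ) := by
      exact_mod_cast Nat.factorial_succ j
    have hf0 : (Nat.factorial j : ℝ) ≠ 0 := by
      exact_mod_cast Nat.factorial_ne_zero j
    have hj1 : ((j:ℝ)+1) ≠ 0 := by positivity
    push_cast
    rw [hfs]
    field_simp
  rwa [h2] at h1

set_option maxHeartbeats 1000000 in
lemma hasDerivAt_besselI1 {x : ℝ} (hx : x ≠ 0) :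
    HasDerivAt besselI1 (besselI0 x - besselI1 x / x) x := by
  have hR : 1 ≤ |x| + 1 := by linarith [abs_nonneg x]
  have hxmem : x ∈ Set.Ioo (-(|x|+1)) (|x|+1) := by
    constructor
    · nlinarith [neg_abs_le x]
    · nlinarith [le_abs_self x]
  have hderiv : ∀ (k : ℕ) (y : ℝ), HasDerivAt
      (fun y : ℝ => (y/2)^(2*k+1) / ((Nat.factorial k : ℝ) * (Nat.factorial (k+1) : ℝ)))
      (((2*k+1 : ℕ):ℝ) * (y/2)^(2*k) * (1/2) /
        ((Nat.factorial k : ℝ) * (Nat.factorial (k+1) : ℝ))) y := by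
    intro k y
    have h := term_deriv (2*k+1) ((Nat.factorial k : ℝ) * (Nat.factorial (k+1) : ℝ)) y
    simpa using h
  have h1 : HasDerivAt besselI1
      (∑' k : ℕ, ((2*k+1 : ℕ):ℝ) * (x/2)^(2*k) * (1/2) /
        ((Nat.factorial k : ℝ) * (Nat.factorial (k+1) : ℝ))) x := by
    refine hasDerivAt_tsum_of_isPreconnected
      (Real.summable_pow_div_factorial (2*(|x|+1)^2)) isOpen_Ioo isPreconnected_Ioo
      (fun k y _ => hderiv k y) ?_ hxmem (summ1 x) hxmem
    intro k y hy
    exact bound1 hR (abs_le.mpr ⟨hy.1.le, hy.2.le⟩ : |y| ≤ |x|+1) k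
  have h2 : (∑' k : ℕ, ((2*k+1 : ℕ):ℝ) * (x/2)^(2*k) * (1/2) /
      ((Nat.factorial k : ℝ) * (Nat.factorial (k+1) : ℝ)))
      = besselI0 x - besselI1 x / x := by
    unfold besselI0 besselI1
    rw [← tsum_div_const]
    rw [← Summable.tsum_sub (summ0 x) ((summ1 x).div_const x)]
    apply tsum_congr
    intro k
    have hfs : (Nat.factorial (k+1) : ℝ) = (k+1) * (Nat.factorial k : ℝ) := by
      exact_mod_cast Nat.factorial_succ k
    have hf0 : (Nat.factorial k : ℝ) ≠ 0 := by
      exact_mod_cast Nat.factorial_ne_zero k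
    have hk1 : ((k:ℝ)+1) ≠ 0 := by positivity
    push_cast
    rw [hfs, pow_succ]
    field_simp
    ring
  rwa [h2] at h1

lemma one_le_besselI0 (x : ℝ) : 1 ≤ besselI0 x := by
  unfold besselI0
  have h := Summable.le_tsum (summ0 x) 0 (fun k _ => by rw [sq_half]; positivity)
  simpa using h

lemma besselI0_pos (x : ℝ) : 0 < besselI0 x := lt_of_lt_of_le one_pos (one_le_besselI0 x)

lemma besselI1_nonneg {x : ℝ} (hx : 0 ≤ x) : 0 ≤ besselI1 x := by
  unfold besselI1
  apply tsum_nonneg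
  intro k
  positivity

set_option maxHeartbeats 1000000 in
lemma amgm (k : ℕ) (x : ℝ) :
    (x/2)^(2*k+1)/((Nat.factorial k : ℝ)*(Nat.factorial (k+1) : ℝ))
      ≤ ((x/2)^(2*k)/(Nat.factorial k : ℝ)^2 + (x/2)^(2*(k+1))/(Nat.factorial (k+1) : ℝ)^2)/2 := by
  have e1 : (x/2)^(2*k+1) = (x/2)^k * (x/2)^(k+1) := by rw [← pow_add]; congr 1; omega
  have e2 : (x/2)^(2*k) = ((x/2)^k)^2 := by rw [← pow_mul]; congr 1; omega
  have e3 : (x/2)^(2*(k+1)) = ((x/2)^(k+1))^2 := by rw [← pow_mul]; congr 1; omega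
  rw [e1, e2, e3]
  have hf0 : (0:ℝ) < (Nat.factorial k : ℝ) := by exact_mod_cast Nat.factorial_pos k
  have hf1 : (0:ℝ) < (Nat.factorial (k+1) : ℝ) := by exact_mod_cast Nat.factorial_pos (k+1)
  generalize (x/2)^k = u
  generalize (x/2)^(k+1) = v
  rw [div_add_div _ _ (by positivity) (by positivity), div_div, div_le_div_iff₀ (by positivity) (by positivity)]
  nlinarith [mul_nonneg (sq_nonneg (u * (Nat.factorial (k+1) : ℝ) - v * (Nat.factorial k : ℝ))) (mul_pos hf0 hf1).le]

set_option maxHeartbeats 1000000 in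
lemma besselI1_le_besselI0 (x : ℝ) : besselI1 x ≤ besselI0 x := by
  have hs0 := summ0 x
  have hshift : Summable (fun k : ℕ => (x/2)^(2*(k+1)) / (Nat.factorial (k+1) : ℝ)^2) :=
    (summable_nat_add_iff 1).mpr hs0
  have hsum2 : Summable (fun k : ℕ =>
      ((x/2)^(2*k)/(Nat.factorial k : ℝ)^2 + (x/2)^(2*(k+1))/(Nat.factorial (k+1) : ℝ)^2)/2) :=
    (hs0.add hshift).div_const 2
  have h1 : besselI1 x ≤ ∑' k : ℕ,
      ((x/2)^(2*k)/(Nat.factorial k : ℝ)^2 + (x/2)^(2*(k+1))/(Nat.factorial (k+1) : ℝ)^2)/2 :=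
    Summable.tsum_le_tsum (fun k => amgm k x) (summ1 x) hsum2
  have h2 : (∑' k : ℕ, ((x/2)^(2*k)/(Nat.factorial k : ℝ)^2
        + (x/2)^(2*(k+1))/(Nat.factorial (k+1) : ℝ)^2)/2)
      = (besselI0 x + (besselI0 x - 1))/2 := by
    rw [tsum_div_const, Summable.tsum_add hs0 hshift]
    congr 1
    congr 1
    have := Summable.tsum_eq_zero_add hs0
    unfold besselI0
    simp only [Nat.mul_zero, pow_zero, Nat.factorial_zero, Nat.cast_one, one_pow, div_one] at this
    linarith [this]
  rw [h2] at h1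
  linarith [one_le_besselI0 x]

lemma hasDerivAt_c_div_pow (c : ℝ) (n : ℕ) {x : ℝ} (hx : x ≠ 0) :
    HasDerivAt (fun x : ℝ => c / x^n) (-(c*n) / x^(n+1)) x := by
  have h := (hasDerivAt_const x c).div (hasDerivAt_pow n x) (pow_ne_zero n hx)
  refine h.congr_deriv ?_
  rcases n with _ | m
  · simp
  · have hm : (m + 1 : ℕ) - 1 = m := rfl
    rw [hm]
    field_simp
    ring

lemma hasDerivAt_p0 {x : ℝ} (hx : x ≠ 0) :
    HasDerivAt (fun x : ℝ => 1 - 1/(2*x) - 1/(8*x^2) - 1/(8*x^3) - 25/(128*x^4))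
      (1/(2*x^2) + 1/(4*x^3) + 3/(8*x^4) + 25/(32*x^5)) x := by
  have h1 := hasDerivAt_c_div_pow (1/2) 1 hx
  have h2 := hasDerivAt_c_div_pow (1/8) 2 hx
  have h3 := hasDerivAt_c_div_pow (1/8) 3 hx
  have h4 := hasDerivAt_c_div_pow (25/128) 4 hx
  have h := ((((hasDerivAt_const x (1:ℝ)).sub h1).sub h2).sub h3).sub h4
  convert h using 1
  · rfl
  · rfl
  · funext y
    simp only [Pi.sub_apply]
    ring
  · field_simp
    ring

lemma hasDerivAt_plow {x : ℝ} (hx : x ≠ 0) :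
    HasDerivAt (fun x : ℝ => 1 - 1/(2*x) - 1/(8*x^2) - 1/(8*x^3) - 25/(128*x^4) - 1/x^5)
      (1/(2*x^2) + 1/(4*x^3) + 3/(8*x^4) + 25/(32*x^5) + 5/x^6) x := by
  have h5 := hasDerivAt_c_div_pow 1 5 hx
  have h := (hasDerivAt_p0 hx).sub h5
  refine h.congr_deriv ?_
  field_simp
  ring

lemma hasDerivAt_ratio {x : ℝ} (hx : 0 < x) :
    HasDerivAt (fun y => besselI1 y / besselI0 y)
      (1 - (besselI1 x / besselI0 x)/x - (besselI1 x / besselI0 x)^2) x := by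
  have h := (hasDerivAt_besselI1 hx.ne').div (hasDerivAt_besselI0 x) (besselI0_pos x).ne'
  refine h.congr_deriv ?_
  have h0 : besselI0 x ≠ 0 := (besselI0_pos x).ne'
  field_simp

-- notation shortcuts as local defs for testing
lemma lemA {x : ℝ} (hx : 5 ≤ x) :
    1 - (1 - 1/(2*x) - 1/(8*x^2) - 1/(8*x^3) - 25/(128*x^4))/x
      - (1 - 1/(2*x) - 1/(8*x^2) - 1/(8*x^3) - 25/(128*x^4))^2
      - (1/(2*x^2) + 1/(4*x^3) + 3/(8*x^4) + 25/(32*x^5)) ≤ 0 := by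
  have hx0 : (0:ℝ) < x := by linarith
  have key : (1 - (1 - 1/(2*x) - 1/(8*x^2) - 1/(8*x^3) - 25/(128*x^4))/x
      - (1 - 1/(2*x) - 1/(8*x^2) - 1/(8*x^3) - 25/(128*x^4))^2
      - (1/(2*x^2) + 1/(4*x^3) + 3/(8*x^4) + 25/(32*x^5))) * x^10
      = -((13/16)*x^5 + (33/512)*x^4 + (25/512)*x^3 + (625/16384)*x^2) := by
    field_simp
    ring
  nlinarith [pow_pos hx0 10, pow_pos hx0 5, pow_pos hx0 4, pow_pos hx0 3, pow_pos hx0 2]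

lemma lemC {x : ℝ} (hx : 5 ≤ x) :
    0 ≤ 1 - (1 - 1/(2*x) - 1/(8*x^2) - 1/(8*x^3) - 25/(128*x^4) - 1/x^5)/x
      - (1 - 1/(2*x) - 1/(8*x^2) - 1/(8*x^3) - 25/(128*x^4) - 1/x^5)^2
      - (1/(2*x^2) + 1/(4*x^3) + 3/(8*x^4) + 25/(32*x^5) + 5/x^6) := by
  have hx0 : (0:ℝ) < x := by linarith
  have key : (1 - (1 - 1/(2*x) - 1/(8*x^2) - 1/(8*x^3) - 25/(128*x^4) - 1/x^5)/x
      - (1 - 1/(2*x) - 1/(8*x^2) - 1/(8*x^3) - 25/(128*x^4) - 1/x^5)^2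
      - (1/(2*x^2) + 1/(4*x^3) + 3/(8*x^4) + 25/(32*x^5) + 5/x^6)) * x^10
      = (19/16)*x^5 - (2593/512)*x^4 - (153/512)*x^3 - (4721/16384)*x^2 - (25/64)*x - 1 := by
    field_simp
    ring
  have h5 : 0 ≤ x^4*(x-5) := mul_nonneg (by positivity) (by linarith)
  have h4 : 0 ≤ x^3*(x-5) := mul_nonneg (by positivity) (by linarith)
  have h3 : 0 ≤ x^2*(x-5) := mul_nonneg (by positivity) (by linarith)
  have h2 : 0 ≤ x*(x-5) := mul_nonneg (by positivity) (by linarith)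
  nlinarith [pow_pos hx0 10, mul_pos (pow_pos hx0 4) (by linarith : (0:ℝ) < x - 4), sq_nonneg x]

lemma plow_ge {x : ℝ} (hx : 5 ≤ x) :
    7/8 ≤ 1 - 1/(2*x) - 1/(8*x^2) - 1/(8*x^3) - 25/(128*x^4) - 1/x^5 := by
  have hx0 : (0:ℝ) < x := by linarith
  have key : (1 - 1/(2*x) - 1/(8*x^2) - 1/(8*x^3) - 25/(128*x^4) - 1/x^5 - 7/8) * x^5
      = (1/8)*x^5 - (1/2)*x^4 - (1/8)*x^3 - (1/8)*x^2 - (25/128)*x - 1 := by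
    field_simp
    ring
  have h5 : 0 ≤ x^4*(x-5) := mul_nonneg (by positivity) (by linarith)
  have h4 : 0 ≤ x^3*(x-5) := mul_nonneg (by positivity) (by linarith)
  have h3 : 0 ≤ x^2*(x-5) := mul_nonneg (by positivity) (by linarith)
  have h2 : 0 ≤ x*(x-5) := mul_nonneg (by positivity) (by linarith)
  nlinarith [pow_pos hx0 5]

lemma p0_ge {x : ℝ} (hx : 5 ≤ x) :
    7/8 ≤ 1 - 1/(2*x) - 1/(8*x^2) - 1/(8*x^3) - 25/(128*x^4) := by
  have hx0 : (0:ℝ) < x := by linarith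
  have h := plow_ge hx
  have : 0 < 1/x^5 := by positivity
  nlinarith

lemma plow_le_one {x : ℝ} (hx : 5 ≤ x) :
    1 - 1/(2*x) - 1/(8*x^2) - 1/(8*x^3) - 25/(128*x^4) - 1/x^5 ≤ 1 := by
  have hx0 : (0:ℝ) < x := by linarith
  have h1 : 0 < 1/(2*x) := by positivity
  have h2 : 0 < 1/(8*x^2) := by positivity
  have h3 : 0 < 1/(8*x^3) := by positivity
  have h4 : 0 < 25/(128*x^4) := by positivity
  have h5 : 0 < 1/x^5 := by positivity
  linarith

lemma p0_nonneg {x : ℝ} (hx : 5 ≤ x) :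
    0 ≤ 1 - 1/(2*x) - 1/(8*x^2) - 1/(8*x^3) - 25/(128*x^4) := by
  have := p0_ge hx; linarith
lemma upper_contact {x E P D : ℝ} (hx : 5 ≤ x) (hE : 0 < E) (hP : 7/8 ≤ P)
    (hA : 1 - P/x - P^2 - D ≤ 0) :
    1 - (P+E)/x - (P+E)^2 < D - E*(1/2) := by
  have hx0 : (0:ℝ) < x := by linarith
  have h1 : 0 < E * x⁻¹ := mul_pos hE (by positivity)
  have h2 : (7/8)*E ≤ P*E := mul_le_mul_of_nonneg_right hP hE.le
  have e : (P+E)/x = P/x + E * x⁻¹ := by field_simp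
  rw [e]
  nlinarith [sq_nonneg E]

lemma lower_contact {x E P D : ℝ} (hx : 5 ≤ x) (hE : 0 < E) (hE1 : E ≤ 1) (hP : 7/8 ≤ P)
    (hC : 0 ≤ 1 - P/x - P^2 - D) :
    D + E*(1/2) < 1 - (P-E)/x - (P-E)^2 := by
  have hx0 : (0:ℝ) < x := by linarith
  have h1 : 0 < E * x⁻¹ := mul_pos hE (by positivity)
  have h2 : (7/8)*E ≤ P*E := mul_le_mul_of_nonneg_right hP hE.le
  have h3 : E*E ≤ 1*E := mul_le_mul_of_nonneg_right hE1 hE.le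
  have e : (P-E)/x = P/x - E * x⁻¹ := by field_simp
  rw [e]
  nlinarith [sq_nonneg E]

lemma ratio_le_upper {b : ℝ} (hb : 5 ≤ b) :
    besselI1 b / besselI0 b
      ≤ (1 - 1/(2*b) - 1/(8*b^2) - 1/(8*b^3) - 25/(128*b^4)) + Real.exp (-((b-5)/2)) := by
  have key : ∀ ⦃z : ℝ⦄, z ∈ Set.Icc (5:ℝ) b → besselI1 z / besselI0 z
      ≤ (1 - 1/(2*z) - 1/(8*z^2) - 1/(8*z^3) - 25/(128*z^4)) + Real.exp (-((z-5)/2)) := by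
    apply image_le_of_deriv_right_lt_deriv_boundary'
      (f := fun y => besselI1 y / besselI0 y)
      (f' := fun y => 1 - (besselI1 y / besselI0 y)/y - (besselI1 y / besselI0 y)^2)
      (B := fun y => (1 - 1/(2*y) - 1/(8*y^2) - 1/(8*y^3) - 25/(128*y^4)) + Real.exp (-((y-5)/2)))
      (B' := fun y => (1/(2*y^2) + 1/(4*y^3) + 3/(8*y^4) + 25/(32*y^5))
        + Real.exp (-((y-5)/2)) * -(1/2))
    case hf =>
      intro y hy
      exact (hasDerivAt_ratio (by linarith [hy.1] : (0:ℝ) < y)).continuousAt.continuousWithinAt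
    case hf' =>
      intro y hy
      exact (hasDerivAt_ratio (by linarith [hy.1] : (0:ℝ) < y)).hasDerivWithinAt
    case ha =>
      have h1 : besselI1 5 / besselI0 5 ≤ 1 :=
        (div_le_one (besselI0_pos 5)).mpr (besselI1_le_besselI0 5)
      have h2 : (0:ℝ) ≤ 1 - 1/(2*(5:ℝ)) - 1/(8*(5:ℝ)^2) - 1/(8*(5:ℝ)^3) - 25/(128*(5:ℝ)^4) :=
        p0_nonneg le_rfl
      have h3 : Real.exp (-(((5:ℝ)-5)/2)) = 1 := by norm_num
      rw [h3]; linarith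
    case hB =>
      intro y hy
      apply ContinuousWithinAt.add
      · apply ContinuousAt.continuousWithinAt
        have hy0 : y ≠ 0 := by
          have := hy.1; intro h; rw [h] at this; norm_num at this
        exact (hasDerivAt_p0 hy0).continuousAt
      · exact (Real.continuous_exp.comp (by continuity)).continuousAt.continuousWithinAt
    case hB' =>
      intro y hy
      have hy0 : y ≠ 0 := by
        have := hy.1; intro h; rw [h] at this; norm_num at this
      exact ((hasDerivAt_p0 hy0).add
        ((((hasDerivAt_id y).sub_const 5).div_const 2).neg.exp)).hasDerivWithinAt
    case bound =>
      intro y hy hc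
      rw [hc]
      have := upper_contact hy.1 (Real.exp_pos (-((y-5)/2)))
        (p0_ge hy.1) (lemA hy.1)
      linarith [this]
  exact key (Set.right_mem_Icc.mpr hb)

lemma lower_le_ratio {b : ℝ} (hb : 5 ≤ b) :
    (1 - 1/(2*b) - 1/(8*b^2) - 1/(8*b^3) - 25/(128*b^4) - 1/b^5) - Real.exp (-((b-5)/2))
      ≤ besselI1 b / besselI0 b := by
  have key : ∀ ⦃z : ℝ⦄, z ∈ Set.Icc (5:ℝ) b →
      (1 - 1/(2*z) - 1/(8*z^2) - 1/(8*z^3) - 25/(128*z^4) - 1/z^5) - Real.exp (-((z-5)/2))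
      ≤ besselI1 z / besselI0 z := by
    apply image_le_of_deriv_right_lt_deriv_boundary'
      (f := fun y => (1 - 1/(2*y) - 1/(8*y^2) - 1/(8*y^3) - 25/(128*y^4) - 1/y^5)
        - Real.exp (-((y-5)/2)))
      (f' := fun y => (1/(2*y^2) + 1/(4*y^3) + 3/(8*y^4) + 25/(32*y^5) + 5/y^6)
        - Real.exp (-((y-5)/2)) * -(1/2))
      (B := fun y => besselI1 y / besselI0 y)
      (B' := fun y => 1 - (besselI1 y / besselI0 y)/y - (besselI1 y / besselI0 y)^2)
    case hf =>
      intro y hy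
      apply ContinuousWithinAt.sub
      · apply ContinuousAt.continuousWithinAt
        have hy0 : y ≠ 0 := by
          have := hy.1; intro h; rw [h] at this; norm_num at this
        exact (hasDerivAt_plow hy0).continuousAt
      · exact (Real.continuous_exp.comp (by continuity)).continuousAt.continuousWithinAt
    case hf' =>
      intro y hy
      have hy0 : y ≠ 0 := by
        have := hy.1; intro h; rw [h] at this; norm_num at this
      exact ((hasDerivAt_plow hy0).sub
        ((((hasDerivAt_id y).sub_const 5).div_const 2).neg.exp)).hasDerivWithinAt
    case ha =>
      have h1 : (0:ℝ) ≤ besselI1 5 / besselI0 5 :=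
        div_nonneg (besselI1_nonneg (by norm_num)) (besselI0_pos 5).le
      have h2 := plow_le_one (le_refl (5:ℝ))
      have h3 : Real.exp (-(((5:ℝ)-5)/2)) = 1 := by norm_num
      rw [h3]; linarith
    case hB =>
      intro y hy
      exact (hasDerivAt_ratio (by linarith [hy.1] : (0:ℝ) < y)).continuousAt.continuousWithinAt
    case hB' =>
      intro y hy
      exact (hasDerivAt_ratio (by linarith [hy.1] : (0:ℝ) < y)).hasDerivWithinAt
    case bound =>
      intro y hy hc
      rw [← hc]
      have hE1 : Real.exp (-((y-5)/2)) ≤ 1 := Real.exp_le_one_iff.mpr (by linarith [hy.1])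
      have := lower_contact hy.1 (Real.exp_pos (-((y-5)/2))) hE1
        (plow_ge hy.1) (lemC hy.1)
      linarith [this]
  exact key (Set.right_mem_Icc.mpr hb)

lemma exp_decay : Tendsto (fun x : ℝ => 32*((x-5)^5 * Real.exp (-((x-5)/2)))) atTop (𝓝 0) := by
  have h := Real.tendsto_pow_mul_exp_neg_atTop_nhds_zero 5
  have h2 : Tendsto (fun x : ℝ => (x-5)/2) atTop atTop :=
    (tendsto_atTop_add_const_right _ (-5) tendsto_id).atTop_div_const (by norm_num)
  have h3 : Tendsto (fun x : ℝ => ((x-5)/2)^5 * Real.exp (-((x-5)/2))) atTop (𝓝 0) := h.comp h2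
  have h4 : Tendsto (fun x : ℝ => 1024 * (((x-5)/2)^5 * Real.exp (-((x-5)/2)))) atTop (𝓝 0) := by
    simpa using h3.const_mul (1024:ℝ)
  refine h4.congr (fun x => ?_)
  ring


/-- Asymptotic expansion of `I₁(x)/I₀(x)` as `x → +∞`:
`I₁(x)/I₀(x) = 1 − 1/(2x) − 1/(8x²) − 1/(8x³) − 25/(128x⁴) + O(1/x⁵)`. -/
theorem besselI1_div_besselI0_asymptotic_expansion :
    (fun x : ℝ => x ^ 4 * (besselI1 x / besselI0 x - 1 + 1 / (2 * x)
        + 1 / (8 * x ^ 2) + 1 / (8 * x ^ 3) + 25 / (128 * x ^ 4)))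
      =O[atTop] fun x : ℝ => 1 / x := by
  rw [isBigO_iff]
  refine ⟨2, ?_⟩
  have h1 : ∀ᶠ x : ℝ in atTop, 32*((x-5)^5 * Real.exp (-((x-5)/2))) < 1 :=
    exp_decay.eventually_lt_const one_pos
  filter_upwards [h1, eventually_ge_atTop (10:ℝ)] with x hexp32 hx10
  have hx5 : (5:ℝ) ≤ x := by linarith
  have hx0 : (0:ℝ) < x := by linarith
  have hexp : x^5 * Real.exp (-((x-5)/2)) < 1 := by
    have hb : x^5 ≤ 32*(x-5)^5 := by
      calc x^5 = 32*(x/2)^5 := by ring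
        _ ≤ 32*(x-5)^5 := by gcongr <;> linarith
    have := mul_le_mul_of_nonneg_right hb (Real.exp_pos (-((x-5)/2))).le
    nlinarith [Real.exp_pos (-((x-5)/2))]
  have hup := ratio_le_upper hx5
  have hlo := lower_le_ratio hx5
  set E := Real.exp (-((x-5)/2)) with hEdef
  have hE : 0 < E := Real.exp_pos _
  set r := besselI1 x / besselI0 x with hrdef
  have e : r - 1 + 1/(2*x) + 1/(8*x^2) + 1/(8*x^3) + 25/(128*x^4)
      = r - (1 - 1/(2*x) - 1/(8*x^2) - 1/(8*x^3) - 25/(128*x^4)) := by ring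
  have h15 : 0 < 1/x^5 := by positivity
  have habs : |r - (1 - 1/(2*x) - 1/(8*x^2) - 1/(8*x^3) - 25/(128*x^4))| ≤ 1/x^5 + E :=
    abs_le.mpr ⟨by linarith, by linarith⟩
  rw [Real.norm_eq_abs, Real.norm_eq_abs, e, abs_mul, abs_pow, abs_of_pos hx0,
    abs_of_pos (by positivity : (0:ℝ) < 1/x)]
  have h2 : x^4 * E ≤ 1/x := by
    rw [le_div_iff₀ hx0]
    calc x^4*E*x = x^5 * E := by ring
      _ ≤ 1 := hexp.le
  calc x^4 * |r - (1 - 1/(2*x) - 1/(8*x^2) - 1/(8*x^3) - 25/(128*x^4))|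
      ≤ x^4 * (1/x^5 + E) := by
        apply mul_le_mul_of_nonneg_left habs (by positivity)
    _ = 1/x + x^4*E := by field_simp
    _ ≤ 1/x + 1/x := by linarith
    _ = 2 * (1/x) := by ring
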